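/- Let K be a totally real number field with discriminant Δ. Every γ ∈ O_K⁺ can be written as γ = γ₀ + β₁² + ⋯ + β_t² for some t ≥ 0, where γ₀ ∈ O_K⁺ satisfies N_{K/ℚ}(γ₀) ≤ Δ and β₁, …, β_t ∈ O_K. -/

import Mathlib

open NumberField

/-- A number field is totally real if every complex embedding has image contained in `ℝ`. -/
def IsTotallyRealField (K : Type) [Field K] : Prop :=
  ∀ σ : K →+* ℂ, ∀ x : K, (σ x).im = 0

/-- An element of a field is totally positive if it is positive under every real embedding. -/
def TotallyPositive {K : Type} [Field K] (x : K) : Prop :=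
  ∀ σ : K →+* ℝ, 0 < σ x

section Aux

open NumberField.InfinitePlace MeasureTheory Module
open scoped Classical

variable {K : Type} [Field K] [NumberField K]

lemma TR.isReal_embedding (hK : IsTotallyRealField K) (φ : K →+* ℂ) :
    ComplexEmbedding.IsReal φ :=
  ComplexEmbedding.isReal_iff.mpr (RingHom.ext fun x => Complex.conj_eq_iff_im.mpr (hK φ x))

/-- The real embedding associated to a complex embedding of a totally real field. -/
noncomputable def TR.realify (hK : IsTotallyRealField K) (φ : K →+* ℂ) : K →+* ℝ :=
  (TR.isReal_embedding hK φ).embedding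

lemma TR.realify_spec (hK : IsTotallyRealField K) (φ : K →+* ℂ) (x : K) :
    ((TR.realify hK φ x : ℝ) : ℂ) = φ x :=
  ComplexEmbedding.IsReal.coe_embedding_apply _ x

lemma TR.norm_eq_prod_realify (hK : IsTotallyRealField K) (x : K) :
    ((Algebra.norm ℚ x : ℚ) : ℝ) = ∏ φ : K →+* ℂ, TR.realify hK φ x := by
  have h1 : ((Algebra.norm ℚ x : ℚ) : ℂ) = ∏ σ : K →ₐ[ℚ] ℂ, σ x := by
    rw [← Algebra.norm_eq_prod_embeddings, eq_ratCast]
  apply Complex.ofReal_injective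
  rw [Complex.ofReal_ratCast, h1, Complex.ofReal_prod]
  exact (Fintype.prod_equiv (RingHom.equivRatAlgHom _ _) _ _ (fun φ => by
    rw [TR.realify_spec]
    simp [RingHom.equivRatAlgHom_apply])).symm

lemma TR.norm_pos (hK : IsTotallyRealField K) {x : K} (hx : TotallyPositive x) :
    0 < Algebra.norm ℚ x := by
  have h : (0 : ℝ) < ((Algebra.norm ℚ x : ℚ) : ℝ) := by
    rw [TR.norm_eq_prod_realify hK x]
    exact Finset.prod_pos fun φ _ => hx _
  exact_mod_cast h

lemma TR.isReal_place (hK : IsTotallyRealField K) (w : InfinitePlace K) : IsReal w :=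
  isReal_iff.mpr (TR.isReal_embedding hK w.embedding)

lemma TR.nrComplexPlaces_eq_zero (hK : IsTotallyRealField K) : nrComplexPlaces K = 0 :=
  Fintype.card_eq_zero_iff.mpr
    ⟨fun w => (not_isReal_iff_isComplex.mpr w.2) (TR.isReal_place hK w.1)⟩

lemma TR.nrRealPlaces_eq (hK : IsTotallyRealField K) : nrRealPlaces K = finrank ℚ K := by
  have := card_add_two_mul_card_eq_rank K
  rw [TR.nrComplexPlaces_eq_zero hK] at this
  simpa using this

lemma TR.mult_eq_one (hK : IsTotallyRealField K) (w : InfinitePlace K) : mult w = 1 := by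
  rw [mult, if_pos (TR.isReal_place hK w)]

lemma TR.discr_pos (hK : IsTotallyRealField K) : 0 < discr K := by
  refine lt_of_le_of_ne ?_ (Ne.symm (discr_ne_zero K))
  have e : Module.Free.ChooseBasisIndex ℤ (𝓞 K) ≃ (K →ₐ[ℚ] ℂ) := by
    refine Fintype.equivOfCardEq ?_
    rw [← Module.finrank_eq_card_chooseBasisIndex, RingOfIntegers.rank, AlgHom.card]
  have h := Algebra.discr_eq_det_embeddingsMatrixReindex_pow_two ℚ ℂ (integralBasis K) e
  set M := Algebra.embeddingsMatrixReindex ℚ ℂ (integralBasis K) e with hM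
  have him : ∀ i j, (M i j).im = 0 := by
    intro i j
    exact hK ((e j : K →ₐ[ℚ] ℂ) : K →+* ℂ) _
  set N : Matrix _ _ ℝ := fun i j => (M i j).re with hN
  have hMN : M = (Complex.ofRealHom).mapMatrix N := by
    apply Matrix.ext
    intro i j
    apply Complex.ext
    · simp [hN]
      rfl
    · simp [hN, him i j]
      rfl
  have hdet : M.det = ((N.det : ℝ) : ℂ) := by
    rw [hMN, ← RingHom.map_det]
    rfl
  have h2 : ((discr K : ℝ) : ℂ) = ((N.det ^ 2 : ℝ) : ℂ) := by
    have h3 : algebraMap ℚ ℂ (Algebra.discr ℚ (integralBasis K)) = ((discr K : ℝ) : ℂ) := by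
      rw [eq_ratCast, ← coe_discr]
      push_cast
      ring
    rw [← h3, h, hdet]
    push_cast
    ring
  have h4 : (discr K : ℝ) = N.det ^ 2 := Complex.ofReal_injective h2
  have : (0 : ℝ) ≤ (discr K : ℝ) := h4 ▸ sq_nonneg _
  exact_mod_cast this

lemma TR.nonempty_embedding : Nonempty (K →+* ℂ) :=
  Fintype.card_pos_iff.mp (by rw [NumberField.Embeddings.card K ℂ]; exact Module.finrank_pos)

open NumberField.mixedEmbedding ENNReal in
lemma TR.descent (hK : IsTotallyRealField K) (γ : 𝓞 K) (hγ : TotallyPositive (γ : K))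
    (h : (discr K : ℚ) < Algebra.norm ℚ (γ : K)) :
    ∃ a : 𝓞 K, TotallyPositive ((γ - a ^ 2 : 𝓞 K) : K) ∧
      Algebra.norm ℚ ((γ - a ^ 2 : 𝓞 K) : K) < Algebra.norm ℚ (γ : K) := by
  classical
  set f : InfinitePlace K → NNReal := fun w => (Real.sqrt (w (γ : K))).toNNReal with hf
  have hfcoe : ∀ w : InfinitePlace K, (f w : ℝ) = Real.sqrt (w (γ : K)) := fun w =>
    Real.coe_toNNReal _ (Real.sqrt_nonneg _)
  -- the product of the f w squared is |N(γ)|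
  have hNpos : 0 < Algebra.norm ℚ (γ : K) := TR.norm_pos hK hγ
  have hprod : ∀ w : InfinitePlace K, ((f w : ℝ≥0∞)) ^ mult w = (f w : ℝ≥0∞) := fun w => by
    rw [TR.mult_eq_one hK, pow_one]
  have hkey : NNReal.sqrt ‖discr K‖₊ < ∏ w : InfinitePlace K, f w := by
    have h2 : ‖discr K‖₊ < (∏ w : InfinitePlace K, f w) ^ 2 := by
      rw [← NNReal.coe_lt_coe]
      have h3 : ((((∏ w : InfinitePlace K, f w) ^ 2 : NNReal)) : ℝ)
          = ∏ w : InfinitePlace K, w (γ : K) ^ mult w := by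
        push_cast
        rw [← Finset.prod_pow]
        refine Finset.prod_congr rfl fun w _ => ?_
        rw [hfcoe, Real.sq_sqrt (apply_nonneg w _), TR.mult_eq_one hK, pow_one]
      rw [h3, prod_eq_abs_norm, coe_nnnorm, Int.norm_eq_abs,
        abs_of_pos (show (0:ℝ) < (discr K : ℝ) by exact_mod_cast TR.discr_pos hK),
        Rat.cast_abs,
        abs_of_pos (show (0:ℝ) < ((Algebra.norm ℚ (γ:K) : ℚ) : ℝ) by exact_mod_cast hNpos)]
      exact_mod_cast h
    calc NNReal.sqrt ‖discr K‖₊ < NNReal.sqrt ((∏ w : InfinitePlace K, f w) ^ 2) :=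
          NNReal.sqrt_lt_sqrt.mpr h2
      _ = ∏ w : InfinitePlace K, f w := NNReal.sqrt_sq _
  have hvol : minkowskiBound K ↑1 < volume (convexBodyLT K f) := by
    rw [convexBodyLT_volume, minkowskiBound,
      volume_fundamentalDomain_fractionalIdealLatticeBasis,
      volume_fundamentalDomain_latticeBasis, TR.nrComplexPlaces_eq_zero hK,
      mixedEmbedding.finrank]
    simp only [pow_zero, one_mul, Units.val_one, FractionalIdeal.absNorm_one, Rat.cast_one,
      ENNReal.ofReal_one]
    have hfac : (convexBodyLTFactor K : ℝ≥0∞) = 2 ^ finrank ℚ K := by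
      rw [convexBodyLTFactor, TR.nrComplexPlaces_eq_zero hK, TR.nrRealPlaces_eq hK]
      push_cast
      ring
    rw [hfac]
    have hp : (∏ w : InfinitePlace K, f w ^ mult w) = ∏ w : InfinitePlace K, f w :=
      Finset.prod_congr rfl fun w _ => by rw [TR.mult_eq_one hK, pow_one]
    rw [hp, mul_comm ((2 : ℝ≥0∞) ^ finrank ℚ K) _]
    refine (ENNReal.mul_lt_mul_iff_left (by positivity) (by exact ENNReal.pow_ne_top ENNReal.ofNat_ne_top)).mpr ?_
    exact_mod_cast hkey
  obtain ⟨a, ha0, haw⟩ := exists_ne_zero_mem_ringOfIntegers_lt K hvol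
  have hsq : ∀ τ : K →+* ℝ, τ ((a : K)) ^ 2 < τ (γ : K) := by
    intro τ
    have hτγ : 0 < τ (γ : K) := hγ τ
    set φ : K →+* ℂ := Complex.ofRealHom.comp τ with hφ
    have happ : ∀ x : K, (InfinitePlace.mk φ) x = |τ x| := by
      intro x
      rw [InfinitePlace.apply]
      simp [hφ]
    have h1 := haw (InfinitePlace.mk φ)
    rw [happ, hfcoe, happ, abs_of_pos hτγ] at h1
    calc τ (a : K) ^ 2 = |τ (a : K)| ^ 2 := (sq_abs _).symm
      _ < Real.sqrt (τ (γ : K)) ^ 2 := by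
          exact pow_lt_pow_left₀ h1 (abs_nonneg _) two_ne_zero
      _ = τ (γ : K) := Real.sq_sqrt hτγ.le
  have hcoe : ((γ - a ^ 2 : 𝓞 K) : K) = (γ : K) - (a : K) ^ 2 := by push_cast; ring
  have htp : TotallyPositive ((γ - a ^ 2 : 𝓞 K) : K) := by
    intro τ
    rw [hcoe, map_sub, map_pow]
    linarith [hsq τ]
  refine ⟨a, htp, ?_⟩
  have hne : Nonempty (K →+* ℂ) := TR.nonempty_embedding
  have hlt : ((Algebra.norm ℚ ((γ - a ^ 2 : 𝓞 K) : K) : ℚ) : ℝ)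
      < ((Algebra.norm ℚ (γ : K) : ℚ) : ℝ) := by
    rw [TR.norm_eq_prod_realify hK, TR.norm_eq_prod_realify hK]
    refine Finset.prod_lt_prod_of_nonempty (fun φ _ => htp _) (fun φ _ => ?_)
      Finset.univ_nonempty
    have ha : TR.realify hK φ (a : K) ≠ 0 := by
      intro h0
      have : φ (a : K) = 0 := by
        rw [← TR.realify_spec hK φ, h0]
        simp
      exact (RingOfIntegers.coe_ne_zero_iff.mpr ha0) (φ.injective (by simpa using this))
    rw [hcoe, map_sub, map_pow]
    have : 0 < TR.realify hK φ (a : K) ^ 2 := by positivity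
    linarith
  exact_mod_cast hlt

end Aux

/-- Every totally positive `γ ∈ 𝓞 K` can be written as `γ₀ + β₁² + ⋯ + β_t²` with
`γ₀` totally positive of norm at most the discriminant `Δ`. -/
theorem totallyPositive_eq_small_add_sum_squares (K : Type) [Field K] [NumberField K]
    (hK : IsTotallyRealField K)
    (γ : 𝓞 K) (hγ : TotallyPositive (γ : K)) :
    ∃ (γ₀ : 𝓞 K) (t : ℕ) (β : Fin t → 𝓞 K),
      TotallyPositive (γ₀ : K) ∧
      Algebra.norm ℚ (γ₀ : K) ≤ (NumberField.discr K : ℚ) ∧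
      γ = γ₀ + ∑ i, β i ^ 2 := by
  suffices H : ∀ n : ℕ, ∀ γ : 𝓞 K, TotallyPositive (γ : K) → (Algebra.norm ℤ γ).toNat = n →
      ∃ (γ₀ : 𝓞 K) (t : ℕ) (β : Fin t → 𝓞 K),
        TotallyPositive (γ₀ : K) ∧
        Algebra.norm ℚ (γ₀ : K) ≤ (NumberField.discr K : ℚ) ∧
        γ = γ₀ + ∑ i, β i ^ 2 by
    exact H _ γ hγ rfl
  intro n
  induction n using Nat.strong_induction_on with
  | _ n ih =>
    intro γ hγ hn
    by_cases h : Algebra.norm ℚ (γ : K) ≤ (NumberField.discr K : ℚ)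
    · exact ⟨γ, 0, fun i => 0, hγ, h, by simp⟩
    · push_neg at h
      obtain ⟨a, htp, hdec⟩ := TR.descent hK γ hγ h
      have hposγ : 0 < Algebra.norm ℤ γ := by
        have := TR.norm_pos hK hγ
        rw [← Algebra.coe_norm_int] at this
        exact_mod_cast this
      have hposγ' : 0 < Algebra.norm ℤ (γ - a ^ 2) := by
        have := TR.norm_pos hK htp
        rw [← Algebra.coe_norm_int] at this
        exact_mod_cast this
      have hdecZ : Algebra.norm ℤ (γ - a ^ 2) < Algebra.norm ℤ γ := by
        rw [← Algebra.coe_norm_int, ← Algebra.coe_norm_int] at hdec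
        exact_mod_cast hdec
      have hlt : (Algebra.norm ℤ (γ - a ^ 2)).toNat < n := by
        rw [← hn]
        exact (Int.toNat_lt_toNat hposγ).mpr hdecZ
      obtain ⟨γ₀, t, β, h1, h2, h3⟩ := ih _ hlt (γ - a ^ 2) htp rfl
      refine ⟨γ₀, t + 1, Fin.cons a β, h1, h2, ?_⟩
      simp only [Fin.sum_univ_succ, Fin.cons_zero, Fin.cons_succ]
      linear_combination h3
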